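/- Even rows of the quantum baker matrix: for 0 ≤ n, m < N with n even, the entry of the quantum baker matrix is 𝖡_{nm} = 1/√2 if n ≡ 2m (mod N), and 𝖡_{nm} = 0 otherwise. -/

import Mathlib

noncomputable section

noncomputable section

/-- Entry of the `M × M` discrete Fourier transform matrix: `M^{-1/2} e^{-2πiab/M}`. -/
def dftEntry (M a b : ℕ) : ℂ :=
  ((Real.sqrt M : ℝ) : ℂ)⁻¹ * Complex.exp (-(2 * Real.pi * Complex.I * a * b) / M)

/-- The `N × N` discrete Fourier transform matrix `(𝓕^N)_{mn} = N^{-1/2} e^{-2πimn/N}`. -/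
def dftMatrix (N : ℕ) : Matrix (Fin N) (Fin N) ℂ :=
  Matrix.of fun m n : Fin N => dftEntry N m n

/-- The diagonal phase matrix `Z` with `Z_{nn} = e^{iπn/N}`. -/
def Zmat (N : ℕ) : Matrix (Fin N) (Fin N) ℂ :=
  Matrix.diagonal fun n : Fin N => Complex.exp (Real.pi * Complex.I * (n : ℕ) / N)

/-- The block-diagonal matrix `D` with upper-left block `𝓕^{N/2}` and lower-right block
`−𝓕^{N/2}`. -/
def Dmat (N : ℕ) : Matrix (Fin N) (Fin N) ℂ :=
  Matrix.of fun m n : Fin N =>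
    if (m : ℕ) < N / 2 ∧ (n : ℕ) < N / 2 then dftEntry (N / 2) m n
    else if N / 2 ≤ (m : ℕ) ∧ N / 2 ≤ (n : ℕ) then
      -dftEntry (N / 2) ((m : ℕ) - N / 2) ((n : ℕ) - N / 2)
    else 0

/-- The quantum baker matrix `𝖡 = Z (𝓕^N)⁻¹ D Z⁻²`. -/
def bakerMatrix (N : ℕ) : Matrix (Fin N) (Fin N) ℂ :=
  Zmat N * (dftMatrix N)⁻¹ * Dmat N * (Zmat N ^ 2)⁻¹

lemma expSum (M : ℕ) (hM : 0 < M) (j : ℤ) :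
    ∑ k ∈ Finset.range M, Complex.exp (2 * Real.pi * Complex.I * j * k / M) =
      if (M : ℤ) ∣ j then (M : ℂ) else 0 := by
  have hM0 : (M : ℂ) ≠ 0 := Nat.cast_ne_zero.mpr hM.ne'
  have hterm : ∀ k ∈ Finset.range M,
      Complex.exp (2 * Real.pi * Complex.I * j * k / M)
        = (Complex.exp (2 * Real.pi * Complex.I * j / M)) ^ k := by
    intro k _
    rw [← Complex.exp_nat_mul]
    ring_nf
  rw [Finset.sum_congr rfl hterm]
  by_cases h : (M : ℤ) ∣ j
  · obtain ⟨c, rfl⟩ := h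
    have h1 : Complex.exp (2 * Real.pi * Complex.I * ((M : ℤ) * c : ℤ) / M) = 1 := by
      rw [Complex.exp_eq_one_iff]
      refine ⟨c, ?_⟩
      push_cast
      field_simp
    have h1' : Complex.exp (2 * Real.pi * Complex.I * ((M:ℂ) * (c:ℂ)) / M) = 1 := by
      exact_mod_cast h1
    rw [if_pos (Dvd.intro c rfl)]
    push_cast
    simp [h1']
  · have hz : Complex.exp (2 * Real.pi * Complex.I * j / M) ≠ 1 := by
      rw [Ne, Complex.exp_eq_one_iff]
      push_neg
      intro c hc
      apply h
      refine ⟨c, ?_⟩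
      have hπ : (Real.pi : ℂ) ≠ 0 := by
        exact_mod_cast Complex.ofReal_ne_zero.mpr Real.pi_ne_zero
      have : (j : ℂ) = (M : ℂ) * c := by
        field_simp at hc
        have h2 : (2 : ℂ) * Real.pi * Complex.I ≠ 0 := by
          simp [Complex.I_ne_zero, hπ]
        have h3 : (2:ℂ) * Real.pi * Complex.I * (j:ℂ)
            = 2 * Real.pi * Complex.I * ((M:ℂ) * c) := by linear_combination (2 * (Real.pi : ℂ) * Complex.I) * hc
        exact mul_left_cancel₀ h2 h3
      exact_mod_cast this
    have hpow : (Complex.exp (2 * Real.pi * Complex.I * j / M)) ^ M = 1 := by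
      rw [← Complex.exp_nat_mul, Complex.exp_eq_one_iff]
      refine ⟨j, ?_⟩
      field_simp
    rw [geom_sum_eq hz, hpow]
    simp [h]

/-- Inverse DFT matrix. -/
def idftMatrix (N : ℕ) : Matrix (Fin N) (Fin N) ℂ :=
  Matrix.of fun a b : Fin N =>
    ((Real.sqrt N : ℝ) : ℂ)⁻¹ * Complex.exp (2 * Real.pi * Complex.I * a * b / N)

lemma sqrt_inv_mul_sqrt_inv (N : ℕ) (hN : 0 < N) :
    (((Real.sqrt N : ℝ) : ℂ)⁻¹ * ((Real.sqrt N : ℝ) : ℂ)⁻¹) * (N : ℂ) = 1 := by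
  have h : (Real.sqrt N) * (Real.sqrt N) = (N : ℝ) :=
    Real.mul_self_sqrt (Nat.cast_nonneg N)
  have hs : ((Real.sqrt N : ℝ) : ℂ) ≠ 0 := by
    rw [Ne, Complex.ofReal_eq_zero, Real.sqrt_eq_zero (Nat.cast_nonneg N)]
    exact_mod_cast hN.ne'
  have hN' : (N : ℂ) = ((Real.sqrt N : ℝ) : ℂ) * ((Real.sqrt N : ℝ) : ℂ) := by
    rw [← Complex.ofReal_mul, h]
    norm_cast
  rw [hN']
  field_simp

lemma dft_inv (N : ℕ) (hN : 0 < N) : (dftMatrix N)⁻¹ = idftMatrix N := by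
  apply Matrix.inv_eq_right_inv
  ext a b
  have hN0 : (N : ℂ) ≠ 0 := Nat.cast_ne_zero.mpr hN.ne'
  rw [Matrix.mul_apply, Matrix.one_apply]
  have hterm : ∀ k : Fin N, dftMatrix N a k * idftMatrix N k b
      = (((Real.sqrt N : ℝ) : ℂ)⁻¹ * ((Real.sqrt N : ℝ) : ℂ)⁻¹) *
        Complex.exp (2 * Real.pi * Complex.I * (((b : ℤ) - (a : ℤ) : ℤ) : ℂ) * (k : ℕ) / N) := by
    intro k
    show dftEntry N a k * _ = _
    rw [dftEntry, idftMatrix]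
    simp only [Matrix.of_apply]
    rw [mul_mul_mul_comm, ← Complex.exp_add]
    congr 1
    push_cast
    ring
  rw [Finset.sum_congr rfl (fun k _ => hterm k), ← Finset.mul_sum]
  rw [Fin.sum_univ_eq_sum_range
    (fun k => Complex.exp (2 * Real.pi * Complex.I * (((b : ℤ) - (a : ℤ) : ℤ) : ℂ) * (k : ℕ) / N))]
  have := expSum N hN ((b : ℤ) - (a : ℤ))
  push_cast at this ⊢
  rw [this]
  by_cases hab : (b : ℤ) - (a : ℤ) = 0
  · have : a = b := by
      have := sub_eq_zero.mp hab
      exact Fin.ext (by omega)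
    rw [if_pos (by exact ⟨0, by omega⟩), if_pos this]
    exact sqrt_inv_mul_sqrt_inv N hN
  · have hdvd : ¬ (N : ℤ) ∣ ((b : ℤ) - (a : ℤ)) := by
      intro hd
      apply hab
      apply Int.eq_zero_of_abs_lt_dvd hd
      have hb := b.isLt
      have ha := a.isLt
      rw [abs_lt]
      omega
    rw [if_neg hdvd, if_neg (by intro hh; apply hab; subst hh; ring)]
    simp



lemma Z2_inv (N : ℕ) (hN : 0 < N) :
    (Zmat N ^ 2)⁻¹ = Matrix.diagonal
      (fun k : Fin N => Complex.exp (-(2 * Real.pi * Complex.I * (k : ℕ)) / N)) := by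
  apply Matrix.inv_eq_right_inv
  rw [sq, Zmat, Matrix.diagonal_mul_diagonal, Matrix.diagonal_mul_diagonal]
  have key : ∀ k : Fin N,
      Complex.exp (Real.pi * Complex.I * (k : ℕ) / N) *
          Complex.exp (Real.pi * Complex.I * (k : ℕ) / N) *
        Complex.exp (-(2 * Real.pi * Complex.I * (k : ℕ)) / N) = 1 := by
    intro k
    rw [← Complex.exp_add, ← Complex.exp_add, ← Complex.exp_zero]
    congr 1
    ring
  ext i j
  rw [Matrix.diagonal_apply, Matrix.one_apply]
  by_cases h : i = j
  · simp [h, key j]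
  · simp [h]




lemma ccM (N M : ℕ) (hM : 0 < M) (hNM : N = 2 * M) :
    ((Real.sqrt N : ℝ) : ℂ)⁻¹ * ((Real.sqrt M : ℝ) : ℂ)⁻¹ * (M : ℂ)
      = ((Real.sqrt 2 : ℝ) : ℂ)⁻¹ := by
  have hsplit : Real.sqrt N = Real.sqrt 2 * Real.sqrt M := by
    rw [show ((N : ℕ) : ℝ) = 2 * (M : ℝ) by push_cast [hNM]; ring,
      Real.sqrt_mul (by norm_num)]
  have key := sqrt_inv_mul_sqrt_inv M hM
  rw [hsplit]
  push_cast
  rw [mul_inv]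
  calc ((Real.sqrt 2 : ℝ) : ℂ)⁻¹ * ((Real.sqrt M : ℝ) : ℂ)⁻¹ *
          ((Real.sqrt M : ℝ) : ℂ)⁻¹ * (M : ℂ)
      = ((Real.sqrt 2 : ℝ) : ℂ)⁻¹ *
          (((Real.sqrt M : ℝ) : ℂ)⁻¹ * ((Real.sqrt M : ℝ) : ℂ)⁻¹ * (M : ℂ)) := by ring
    _ = ((Real.sqrt 2 : ℝ) : ℂ)⁻¹ := by rw [key, mul_one]

/-- Even rows of the quantum baker matrix: for `n` even,
`𝖡_{nm} = 1/√2` if `n ≡ 2m (mod N)` and `0` otherwise. -/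
theorem bakerMatrix_even_row (N : ℕ) (hN : 0 < N) (hNeven : Even N)
    (n m : Fin N) (hn : Even (n : ℕ)) :
    bakerMatrix N n m =
      if (n : ℕ) % N = (2 * (m : ℕ)) % N then ((Real.sqrt 2 : ℝ) : ℂ)⁻¹ else 0 := by
  obtain ⟨M, hMM⟩ := hNeven
  have hNM : N = 2 * M := by omega
  have hM : 0 < M := by omega
  have hM0 : (M : ℂ) ≠ 0 := Nat.cast_ne_zero.mpr hM.ne'
  have hN0 : (N : ℂ) ≠ 0 := Nat.cast_ne_zero.mpr hN.ne'
  have hN2 : N / 2 = M := by omega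
  obtain ⟨t, htt⟩ := hn
  have ht : (n : ℕ) = 2 * t := by omega
  have htM : t < M := by have := n.isLt; omega
  have hmN : (m : ℕ) < N := m.isLt
  have hnN : (n : ℕ) < N := n.isLt
  have e1 : (n : ℕ) % N = (n : ℕ) := Nat.mod_eq_of_lt hnN
  have hNc : ((N : ℕ) : ℂ) = 2 * (M : ℂ) := by rw [hNM]; push_cast; ring
  rw [bakerMatrix, dft_inv N hN, Z2_inv N hN, mul_assoc, mul_assoc, Zmat]
  rw [Matrix.diagonal_mul, Matrix.mul_apply]
  simp_rw [Matrix.mul_diagonal]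
  simp_rw [← mul_assoc]
  rw [← Finset.sum_mul]
  -- core sum computation
  have hsum : (∑ k : Fin N, idftMatrix N n k * Dmat N k m)
      = if (n : ℕ) % N = (2 * (m : ℕ)) % N then
          (if (m : ℕ) < M then
            ((Real.sqrt N : ℝ) : ℂ)⁻¹ * ((Real.sqrt M : ℝ) : ℂ)⁻¹ * (M : ℂ)
          else -(((Real.sqrt N : ℝ) : ℂ)⁻¹ * ((Real.sqrt M : ℝ) : ℂ)⁻¹ * (M : ℂ)))
        else 0 := by
    set f : ℕ → ℂ := fun k =>
      ((Real.sqrt N : ℝ) : ℂ)⁻¹ * Complex.exp (2 * Real.pi * Complex.I * (n : ℕ) * k / N) *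
        (if k < M ∧ (m : ℕ) < M then dftEntry M k (m : ℕ)
         else if M ≤ k ∧ M ≤ (m : ℕ) then -dftEntry M (k - M) ((m : ℕ) - M) else 0)
      with hf
    have hrw : ∀ k : Fin N, idftMatrix N n k * Dmat N k m = f (k : ℕ) := by
      intro k
      simp only [idftMatrix, Dmat, Matrix.of_apply, hN2, hf]
    rw [Finset.sum_congr rfl (fun k _ => hrw k), Fin.sum_univ_eq_sum_range f N,
      show Finset.range N = Finset.range (M + M) from by rw [← hMM],
      Finset.sum_range_add]
    by_cases hm : (m : ℕ) < M
    · have e2 : (2 * (m : ℕ)) % N = 2 * (m : ℕ) := Nat.mod_eq_of_lt (by omega)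
      have h2z : ∑ i ∈ Finset.range M, f (M + i) = 0 := by
        refine Finset.sum_eq_zero fun i _ => ?_
        rw [hf]
        have c1 : ¬(M + i < M ∧ (m : ℕ) < M) := by omega
        have c2 : ¬(M ≤ M + i ∧ M ≤ (m : ℕ)) := by omega
        simp only [if_neg c1, if_neg c2, mul_zero]
      have h1 : ∀ k ∈ Finset.range M, f k =
          (((Real.sqrt N : ℝ) : ℂ)⁻¹ * ((Real.sqrt M : ℝ) : ℂ)⁻¹) *
            Complex.exp (2 * Real.pi * Complex.I * ((((t : ℤ) - (m : ℤ)) : ℤ) : ℂ) * k / M) := by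
        intro k hk
        rw [hf]
        simp only
        rw [if_pos ⟨Finset.mem_range.mp hk, hm⟩, dftEntry, mul_mul_mul_comm,
          ← Complex.exp_add]
        have harg : (2 : ℂ) * Real.pi * Complex.I * ((n : ℕ) : ℂ) * (k : ℂ) / (N : ℂ) +
            -(2 * Real.pi * Complex.I * (k : ℂ) * ((m : ℕ) : ℂ)) / (M : ℂ)
            = 2 * Real.pi * Complex.I * ((((t : ℤ) - (m : ℤ)) : ℤ) : ℂ) * (k : ℂ) / (M : ℂ) := by
          rw [ht, hNc]
          push_cast
          field_simp
          ring
        rw [harg]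
      rw [Finset.sum_congr rfl h1, h2z, add_zero, ← Finset.mul_sum,
        expSum M hM ((t : ℤ) - (m : ℤ))]
      by_cases hd : (M : ℤ) ∣ ((t : ℤ) - (m : ℤ))
      · have htm : t = m := by
          have := Int.eq_zero_of_abs_lt_dvd hd (by rw [abs_lt]; constructor <;> omega)
          omega
        have hcond : (n : ℕ) % N = (2 * (m : ℕ)) % N := by omega
        rw [if_pos hd, if_pos hcond, if_pos hm]
      · have hcond : ¬((n : ℕ) % N = (2 * (m : ℕ)) % N) := by
          intro hc
          have h' : t = (m : ℕ) := by omega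
          exact hd (by rw [h', sub_self]; exact dvd_zero _)
        rw [if_neg hd, if_neg hcond, mul_zero]
    · push_neg at hm
      have e2 : (2 * (m : ℕ)) % N = 2 * (m : ℕ) - N := by
        have h := Nat.add_mod_right (2 * (m : ℕ) - N) N
        rw [show 2 * (m : ℕ) - N + N = 2 * (m : ℕ) from by omega] at h
        rw [h]
        exact Nat.mod_eq_of_lt (show 2 * (m : ℕ) - N < N by omega)
      have h1z : ∑ i ∈ Finset.range M, f i = 0 := by
        refine Finset.sum_eq_zero fun i hi => ?_
        rw [hf]
        have c1 : ¬(i < M ∧ (m : ℕ) < M) := by omega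
        have c2 : ¬(M ≤ i ∧ M ≤ (m : ℕ)) := by
          have := Finset.mem_range.mp hi; omega
        simp only [if_neg c1, if_neg c2, mul_zero]
      have h2 : ∀ k ∈ Finset.range M, f (M + k) =
          -((((Real.sqrt N : ℝ) : ℂ)⁻¹ * ((Real.sqrt M : ℝ) : ℂ)⁻¹) *
            Complex.exp (2 * Real.pi * Complex.I * ((((t : ℤ) - (m : ℤ) + (M : ℤ)) : ℤ) : ℂ) * k / M)) := by
        intro k hk
        rw [hf]
        simp only
        have c1 : ¬(M + k < M ∧ (m : ℕ) < M) := by omega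
        rw [if_neg c1, if_pos ⟨by omega, hm⟩, dftEntry]
        rw [show M + k - M = k from by omega]
        rw [mul_neg, mul_mul_mul_comm, ← Complex.exp_add]
        rw [show (2 : ℂ) * Real.pi * Complex.I * ((n : ℕ) : ℂ) * ((M + k : ℕ) : ℂ) / N +
              -(2 * Real.pi * Complex.I * ((k : ℕ) : ℂ) * (((m : ℕ) - M : ℕ) : ℂ)) / M
            = 2 * Real.pi * Complex.I * ((((t : ℤ) - (m : ℤ) + (M : ℤ)) : ℤ) : ℂ) * k / M +
              (t : ℤ) * (2 * Real.pi * Complex.I) from ?_]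
        · rw [Complex.exp_add, Complex.exp_int_mul_two_pi_mul_I, mul_one]
        · rw [ht, hNc]
          have hmM : ((((m : ℕ) - M : ℕ)) : ℂ) = ((m : ℕ) : ℂ) - (M : ℂ) := by
            have : ((m : ℕ) - M : ℕ) = (m : ℕ) - M := rfl
            push_cast [Nat.cast_sub hm]
            ring
          push_cast [hmM]
          field_simp
          ring
      rw [Finset.sum_congr rfl h2, h1z, zero_add]
      rw [Finset.sum_neg_distrib, ← Finset.mul_sum,
        expSum M hM ((t : ℤ) - (m : ℤ) + (M : ℤ))]
      by_cases hd : (M : ℤ) ∣ ((t : ℤ) - (m : ℤ) + (M : ℤ))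
      · have htm : (m : ℕ) = t + M := by
          have := Int.eq_zero_of_abs_lt_dvd hd (by rw [abs_lt]; constructor <;> omega)
          omega
        have hcond : (n : ℕ) % N = (2 * (m : ℕ)) % N := by omega
        rw [if_pos hd, if_pos hcond, if_neg (by omega)]
      · have hcond : ¬((n : ℕ) % N = (2 * (m : ℕ)) % N) := by
          intro hc
          refine hd ?_
          have : (m : ℕ) = t + M := by omega
          rw [this]
          push_cast
          have h0 : (t : ℤ) - ((t : ℤ) + (M : ℤ)) + (M : ℤ) = 0 := by ring
          rw [h0]
          exact dvd_zero _
        rw [if_neg hd, if_neg hcond, mul_zero, neg_zero]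
  rw [hsum]
  by_cases hcond : (n : ℕ) % N = (2 * (m : ℕ)) % N
  · rw [if_pos hcond, if_pos hcond]
    by_cases hm : (m : ℕ) < M
    · rw [if_pos hm]
      have e2 : (2 * (m : ℕ)) % N = 2 * (m : ℕ) := Nat.mod_eq_of_lt (by omega)
      have h2m : (n : ℕ) = 2 * (m : ℕ) := by omega
      rw [show Complex.exp (Real.pi * Complex.I * ((n : ℕ) : ℂ) / N) *
            ((((Real.sqrt N : ℝ) : ℂ)⁻¹ * ((Real.sqrt M : ℝ) : ℂ)⁻¹ * (M : ℂ)) *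
              Complex.exp (-(2 * Real.pi * Complex.I * ((m : ℕ) : ℂ)) / N))
          = (Complex.exp (Real.pi * Complex.I * ((n : ℕ) : ℂ) / N) *
              Complex.exp (-(2 * Real.pi * Complex.I * ((m : ℕ) : ℂ)) / N)) *
            (((Real.sqrt N : ℝ) : ℂ)⁻¹ * ((Real.sqrt M : ℝ) : ℂ)⁻¹ * (M : ℂ)) from by ring]
      rw [← Complex.exp_add]
      rw [show Real.pi * Complex.I * ((n : ℕ) : ℂ) / N +
            -(2 * Real.pi * Complex.I * ((m : ℕ) : ℂ)) / N = 0 from by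
        rw [h2m]; push_cast; ring]
      rw [Complex.exp_zero, one_mul]
      exact ccM N M hM hNM
    · rw [if_neg hm]
      push_neg at hm
      have e2 : (2 * (m : ℕ)) % N = 2 * (m : ℕ) - N := by
        have h := Nat.add_mod_right (2 * (m : ℕ) - N) N
        rw [show 2 * (m : ℕ) - N + N = 2 * (m : ℕ) from by omega] at h
        rw [h]
        exact Nat.mod_eq_of_lt (show 2 * (m : ℕ) - N < N by omega)
      have h2m : (n : ℕ) + N = 2 * (m : ℕ) := by omega
      have hc : ((n : ℕ) : ℂ) + (N : ℂ) = 2 * ((m : ℕ) : ℂ) := by exact_mod_cast h2m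
      rw [show Complex.exp (Real.pi * Complex.I * ((n : ℕ) : ℂ) / N) *
            (-(((Real.sqrt N : ℝ) : ℂ)⁻¹ * ((Real.sqrt M : ℝ) : ℂ)⁻¹ * (M : ℂ)) *
              Complex.exp (-(2 * Real.pi * Complex.I * ((m : ℕ) : ℂ)) / N))
          = (Complex.exp (Real.pi * Complex.I * ((n : ℕ) : ℂ) / N) *
              Complex.exp (-(2 * Real.pi * Complex.I * ((m : ℕ) : ℂ)) / N)) *
            (-(((Real.sqrt N : ℝ) : ℂ)⁻¹ * ((Real.sqrt M : ℝ) : ℂ)⁻¹ * (M : ℂ))) from by ring]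
      rw [← Complex.exp_add]
      rw [show Real.pi * Complex.I * ((n : ℕ) : ℂ) / N +
            -(2 * Real.pi * Complex.I * ((m : ℕ) : ℂ)) / N = -(Real.pi * Complex.I) from by
        field_simp
        linear_combination hc]
      rw [Complex.exp_neg, Complex.exp_pi_mul_I]
      rw [← ccM N M hM hNM]
      ring
  · rw [if_neg hcond, if_neg hcond]
    ring

end
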